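/- Let M be a nonempty connected topological 2-manifold (a T2 charted space over EuclideanSpace ℝ (Fin 2)). For any n : ℕ and any injective tuples x, y : Fin n → M, there exists a homeomorphism h : M ≃ₜ M such that h (x i) = y i for every i : Fin n. -/

import Mathlib

open Set Metric Topology NNReal

section BallMove

variable {E : Type*} [NormedAddCommGroup E] [NormedSpace ℝ E]

/-- A homeomorphism of a normed space supported in a ball, moving the center to a
prescribed point of the ball. -/
lemma exists_homeo_ball_move [CompleteSpace E] [Nontrivial E] (a b : E) (r : ℝ) (hr : 0 < r)
    (hb : dist b a < r) :
    ∃ g : E ≃ₜ E, g a = b ∧ (∀ p, p ∉ ball a r → g p = p) ∧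
      (∀ p, p ∈ ball a r → g p ∈ ball a r) := by
  classical
  set v : E := b - a with hv
  have hvn : ‖v‖ < r := by rwa [hv, ← dist_eq_norm]
  set ρ : E → ℝ := fun p => max (r - dist p a) 0 / r with hρ
  set f : E → E := fun p => p + ρ p • v with hf
  have hρa : ρ a = 1 := by
    simp [hρ, dist_self, max_eq_left hr.le, div_self hr.ne']
  have hfa : f a = b := by
    simp [hf, hρa, hv]
  have hρ0 : ∀ p, p ∉ ball a r → ρ p = 0 := by
    intro p hp
    have h1 : r - dist p a ≤ 0 := by
      simp only [mem_ball, not_lt] at hp; linarith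
    simp [hρ, max_eq_right h1]
  have hf0 : ∀ p, p ∉ ball a r → f p = p := by
    intro p hp; simp [hf, hρ0 p hp]
  have hfball : ∀ p, p ∈ ball a r → f p ∈ ball a r := by
    intro p hp
    have hd : dist p a < r := mem_ball.1 hp
    have hd0 : 0 ≤ dist p a := dist_nonneg
    have hρp : ρ p = (r - dist p a) / r := by
      simp [hρ, max_eq_left (by linarith : (0:ℝ) ≤ r - dist p a)]
    have h1 : dist (f p) a ≤ dist p a + (r - dist p a) / r * ‖v‖ := by
      have h2 : dist (f p) a ≤ dist p a + ‖ρ p • v‖ := by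
        calc dist (f p) a = ‖(p - a) + ρ p • v‖ := by
              rw [dist_eq_norm]; congr 1; simp only [hf]; abel
          _ ≤ ‖p - a‖ + ‖ρ p • v‖ := norm_add_le _ _
          _ = dist p a + ‖ρ p • v‖ := by rw [dist_eq_norm]
      rw [norm_smul, hρp, Real.norm_eq_abs,
        abs_of_nonneg (div_nonneg (by linarith) hr.le)] at h2
      exact h2
    have h2 : (r - dist p a) / r * ‖v‖ < r - dist p a := by
      have h3 : (r - dist p a) * (‖v‖ / r) < (r - dist p a) * 1 :=
        mul_lt_mul_of_pos_left ((div_lt_one hr).2 hvn) (by linarith)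
      calc (r - dist p a) / r * ‖v‖ = (r - dist p a) * (‖v‖ / r) := by ring
        _ < (r - dist p a) * 1 := h3
        _ = r - dist p a := by ring
    exact mem_ball.2 (by linarith)
  -- `f` approximates the identity
  set c : ℝ≥0 := Real.toNNReal (‖v‖ / r) with hc
  have hcc : (c : ℝ) = ‖v‖ / r := Real.coe_toNNReal _ (by positivity)
  have happrox : ApproximatesLinearOn f
      ((ContinuousLinearEquiv.refl ℝ E : E ≃L[ℝ] E) : E →L[ℝ] E) univ c := by
    intro x _ y _
    have hxy : f x - f y - (ContinuousLinearEquiv.refl ℝ E : E →L[ℝ] E) (x - y)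
        = (ρ x - ρ y) • v := by
      simp only [hf, ContinuousLinearEquiv.coe_coe, ContinuousLinearEquiv.refl_apply]
      module
    rw [hxy, norm_smul, Real.norm_eq_abs, hcc]
    have hlip : |ρ x - ρ y| ≤ dist x y / r := by
      have h1 : |max (r - dist x a) 0 - max (r - dist y a) 0|
          ≤ |(r - dist x a) - (r - dist y a)| := abs_max_sub_max_le_abs _ _ _
      have h2 : |(r - dist x a) - (r - dist y a)| = |dist y a - dist x a| := by
        rw [show (r - dist x a) - (r - dist y a) = dist y a - dist x a by ring]
      have h3 : |dist y a - dist x a| ≤ dist x y := by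
        rw [dist_comm x y]; exact abs_dist_sub_le _ _ _
      have h4 : |ρ x - ρ y| = |max (r - dist x a) 0 - max (r - dist y a) 0| / r := by
        rw [hρ]; rw [div_sub_div_same, abs_div, abs_of_pos hr]
      rw [h4]
      gcongr
      exact h1.trans (h2 ▸ h3)
    calc |ρ x - ρ y| * ‖v‖ ≤ dist x y / r * ‖v‖ :=
          mul_le_mul_of_nonneg_right hlip (norm_nonneg v)
      _ = ‖v‖ / r * ‖x - y‖ := by rw [dist_eq_norm]; ring
  have hN : (((ContinuousLinearEquiv.refl ℝ E).symm : E ≃L[ℝ] E) : E →L[ℝ] E)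
      = ContinuousLinearMap.id ℝ E := by simp
  have hclt : Subsingleton E ∨
      c < ‖(((ContinuousLinearEquiv.refl ℝ E).symm : E ≃L[ℝ] E) : E →L[ℝ] E)‖₊⁻¹ := by
    refine Or.inr ?_
    rw [hN, ContinuousLinearMap.nnnorm_id, inv_one, ← NNReal.coe_lt_coe, hcc,
      NNReal.coe_one]
    exact (div_lt_one hr).2 hvn
  set g : E ≃ₜ E := happrox.toHomeomorph f hclt with hg
  have hgf : ∀ p, g p = f p := fun p => rfl
  exact ⟨g, by rw [hgf, hfa], fun p hp => by rw [hgf, hf0 p hp],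
    fun p hp => by rw [hgf]; exact hfball p hp⟩

/-- Gluing a compactly supported homeomorphism of the model space into a chart. -/
lemma exists_glue_homeo {M : Type*} [TopologicalSpace M] [T2Space M] [ProperSpace E]
    (φ : OpenPartialHomeomorph M E) (g : E ≃ₜ E) (a : E) (r : ℝ)
    (hK : closedBall a r ⊆ φ.target)
    (hg1 : ∀ p, p ∉ ball a r → g p = p) (hg2 : ∀ p, p ∈ ball a r → g p ∈ ball a r) :
    ∃ h : M ≃ₜ M, (∀ m ∈ φ.source, h m = φ.symm (g (φ m))) ∧
      (∀ m, m ∉ φ.symm '' closedBall a r → h m = m) := by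
  classical
  have hg1' : ∀ p, p ∉ ball a r → g.symm p = p := by
    intro p hp
    have h1 : g.symm p ∉ ball a r := by
      intro h'
      exact hp (by simpa using hg2 _ h')
    have h3 : g (g.symm p) = p := g.apply_symm_apply p
    rw [hg1 _ h1] at h3
    exact h3
  have hg2' : ∀ p, p ∈ ball a r → g.symm p ∈ ball a r := by
    intro p hp
    by_contra h1
    have h3 : g (g.symm p) = p := g.apply_symm_apply p
    rw [hg1 _ h1] at h3
    rw [h3] at h1
    exact h1 hp
  -- the glued map
  set A : (E → E) → M → M := fun g' m => if m ∈ φ.source then φ.symm (g' (φ m)) else m with hA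
  have htarget : ∀ (g' : E → E), (∀ p, p ∉ ball a r → g' p = p) →
      (∀ p, p ∈ ball a r → g' p ∈ ball a r) → ∀ p ∈ φ.target, g' p ∈ φ.target := by
    intro g' h1 h2 p hp
    by_cases hpb : p ∈ ball a r
    · exact hK (ball_subset_closedBall (h2 p hpb))
    · rw [h1 p hpb]; exact hp
  have himg_sub : φ.symm '' closedBall a r ⊆ φ.source := by
    rintro m ⟨q, hq, rfl⟩
    exact φ.map_target (hK hq)
  have hfix : ∀ (g' : E → E), (∀ p, p ∉ ball a r → g' p = p) →
      ∀ m, m ∉ φ.symm '' closedBall a r → A g' m = m := by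
    intro g' h1 m hm
    by_cases hms : m ∈ φ.source
    · have h2 : φ m ∉ closedBall a r := by
        intro hc
        exact hm ⟨φ m, hc, φ.left_inv hms⟩
      have h3 : φ m ∉ ball a r := fun h => h2 (ball_subset_closedBall h)
      simp only [hA, if_pos hms, h1 _ h3, φ.left_inv hms]
    · simp only [hA, if_neg hms]
  have hcont : ∀ (g' : E ≃ₜ E), (∀ p, p ∉ ball a r → g' p = p) →
      (∀ p, p ∈ ball a r → g' p ∈ ball a r) → Continuous (A g') := by
    intro g' h1 h2
    rw [continuous_iff_continuousAt]
    intro m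
    by_cases hms : m ∈ φ.source
    · have hco : ContinuousOn (fun m' => φ.symm (g' (φ m'))) φ.source := by
        apply φ.symm.continuousOn.comp (g'.continuous.comp_continuousOn φ.continuousOn)
        intro m' hm'
        exact htarget g' h1 h2 _ (φ.map_source hm')
      have hca : ContinuousAt (fun m' => φ.symm (g' (φ m'))) m :=
        hco.continuousAt (φ.open_source.mem_nhds hms)
      apply hca.congr
      filter_upwards [φ.open_source.mem_nhds hms] with m' hm'
      simp only [hA, if_pos hm']
    · have hKc : IsClosed (φ.symm '' closedBall a r) :=
        ((isCompact_closedBall a r).image_of_continuousOn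
          (φ.symm.continuousOn.mono hK)).isClosed
      have hmK : m ∉ φ.symm '' closedBall a r := fun h => hms (himg_sub h)
      have hca : ContinuousAt id m := continuousAt_id
      apply hca.congr
      filter_upwards [hKc.isOpen_compl.mem_nhds hmK] with m' hm'
      exact (hfix g' (fun p hp => (h1 p hp)) m' hm').symm
  have hinv : ∀ (g' : E ≃ₜ E), (∀ p, p ∉ ball a r → g' p = p) →
      (∀ p, p ∈ ball a r → g' p ∈ ball a r) →
      Function.LeftInverse (A g'.symm) (A g') := by
    intro g' h1 h2 m
    by_cases hms : m ∈ φ.source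
    · have hgt : g' (φ m) ∈ φ.target := htarget g' h1 h2 _ (φ.map_source hms)
      have hsrc : φ.symm (g' (φ m)) ∈ φ.source := φ.map_target hgt
      simp only [hA, if_pos hms, if_pos hsrc, φ.right_inv hgt,
        Homeomorph.symm_apply_apply, φ.left_inv hms]
    · simp only [hA, if_neg hms]
  refine ⟨⟨⟨A g, A g.symm, hinv g hg1 hg2, hinv g.symm hg1' hg2'⟩,
    hcont g hg1 hg2, hcont g.symm hg1' hg2'⟩, ?_, ?_⟩
  · intro m hm
    simp only [hA, Homeomorph.homeomorph_mk_coe, Equiv.coe_fn_mk, if_pos hm]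
  · intro m hm
    exact hfix g hg1 m hm

end BallMove

section Surface

local notation "E2" => EuclideanSpace ℝ (Fin 2)

variable {M : Type*} [TopologicalSpace M] [T2Space M] [ChartedSpace (EuclideanSpace ℝ (Fin 2)) M]

lemma one_lt_rank_E2 : 1 < Module.rank ℝ (EuclideanSpace ℝ (Fin 2)) := by
  rw [← Module.finrank_eq_rank]
  norm_cast
  rw [finrank_euclideanSpace_fin]
  norm_num

lemma punctured_ball_pathConnected (c : E2) (r : ℝ) (hr : 0 < r) :
    IsPathConnected (ball c r \ {c}) := by
  have h0 : IsPathConnected ({(0 : E2)}ᶜ) :=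
    isPathConnected_compl_singleton_of_one_lt_rank one_lt_rank_E2 0
  set ψ := OpenPartialHomeomorph.univBall (c : E2) r with hψ
  have hsrc : ψ.source = univ := OpenPartialHomeomorph.univBall_source c r
  have htgt : ψ.target = ball c r := OpenPartialHomeomorph.univBall_target c hr
  have hzero : ψ 0 = c := OpenPartialHomeomorph.univBall_apply_zero c r
  have himg : ψ '' ({0}ᶜ) = ball c r \ {c} := by
    ext p
    constructor
    · rintro ⟨q, hq, rfl⟩
      refine ⟨htgt ▸ ψ.map_source (hsrc ▸ mem_univ q), ?_⟩
      simp only [mem_singleton_iff]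
      intro hc
      apply hq
      have : ψ q = ψ 0 := by rw [hzero, hc]
      exact ψ.injOn (hsrc ▸ mem_univ q) (hsrc ▸ mem_univ (0 : E2)) this
    · rintro ⟨hp, hpc⟩
      refine ⟨ψ.symm p, ?_, ψ.right_inv (htgt ▸ hp)⟩
      intro h0'
      simp only [mem_singleton_iff] at h0' hpc
      apply hpc
      have := ψ.right_inv (htgt ▸ hp)
      rw [h0', hzero] at this
      exact this.symm
  rw [← himg]
  apply h0.image' (ψ.continuousOn.mono (by rw [hsrc]; exact subset_univ _))

/-- Any point of an open set in a surface has an open punctured neighbourhood inside the set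
which is preconnected and nonempty. -/
lemma punctured_nbhd (s : Set M) (hs : IsOpen s) (z : M) (hz : z ∈ s) :
    ∃ V : Set M, IsOpen V ∧ z ∈ V ∧ V ⊆ s ∧ IsPreconnected (V \ {z}) ∧ (V \ {z}).Nonempty := by
  set φ := chartAt (EuclideanSpace ℝ (Fin 2)) z with hφ
  have hzs : z ∈ φ.source := mem_chart_source _ z
  set W : Set M := φ.source ∩ s with hW
  have hWo : IsOpen W := φ.open_source.inter hs
  have hWs : W ⊆ φ.source := inter_subset_left
  have hWopen : IsOpen (φ '' W) := φ.isOpen_image_of_subset_source hWo hWs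
  have hWt : φ '' W ⊆ φ.target := by
    rw [← φ.image_source_eq_target]; exact image_mono hWs
  have hzW : φ z ∈ φ '' W := ⟨z, ⟨hzs, hz⟩, rfl⟩
  obtain ⟨ε, hε, hball⟩ := Metric.isOpen_iff.1 hWopen _ hzW
  set V : Set M := φ.symm '' ball (φ z) ε with hV
  have hbt : ball (φ z) ε ⊆ φ.target := fun p hp => hWt (hball hp)
  have hVo : IsOpen V := by
    apply φ.symm.isOpen_image_of_subset_source isOpen_ball
    rw [φ.symm_source]; exact hbt
  have hzV : z ∈ V := ⟨φ z, mem_ball_self hε, φ.left_inv hzs⟩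
  have hVs : V ⊆ s := by
    rintro m ⟨p, hp, rfl⟩
    obtain ⟨w, hw, rfl⟩ := hball hp
    rw [φ.left_inv (hWs hw)]
    exact hw.2
  have hVdiff : V \ {z} = φ.symm '' (ball (φ z) ε \ {φ z}) := by
    ext m
    constructor
    · rintro ⟨⟨p, hp, rfl⟩, hm⟩
      refine ⟨p, ⟨hp, ?_⟩, rfl⟩
      simp only [mem_singleton_iff] at hm ⊢
      intro hpz
      exact hm (by rw [hpz, φ.left_inv hzs])
    · rintro ⟨p, ⟨hp, hpz⟩, rfl⟩
      refine ⟨⟨p, hp, rfl⟩, ?_⟩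
      simp only [mem_singleton_iff] at hpz ⊢
      intro h
      apply hpz
      have : φ (φ.symm p) = φ z := by rw [h]
      rwa [φ.right_inv (hbt hp)] at this
  have hpc : IsPathConnected (V \ {z}) := by
    rw [hVdiff]
    exact (punctured_ball_pathConnected (φ z) ε hε).image'
      (φ.symm.continuousOn.mono (fun p hp => hbt hp.1))
  obtain ⟨w, hw⟩ := exists_norm_eq (EuclideanSpace ℝ (Fin 2)) (by positivity : (0:ℝ) ≤ ε / 2)
  have hwb : φ z + w ∈ ball (φ z) ε \ {φ z} := by
    constructor
    · rw [mem_ball, dist_eq_norm]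
      simp only [add_sub_cancel_left, hw]
      linarith
    · simp only [mem_singleton_iff]
      intro h
      have : w = 0 := by
        have := congrArg (· - φ z) h
        simpa using this
      rw [this, norm_zero] at hw
      linarith
  exact ⟨V, hVo, hzV, hVs, hpc.isConnected.isPreconnected,
    hVdiff ▸ ⟨φ.symm (φ z + w), mem_image_of_mem _ hwb⟩⟩

/-- Removing a point from an open preconnected set in a surface keeps it preconnected. -/
lemma diff_singleton_preconnected {s : Set M} (hs : IsOpen s) (hsc : IsPreconnected s)
    (z : M) : IsPreconnected (s \ {z}) := by
  by_cases hz : z ∈ s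
  swap
  · rwa [diff_singleton_eq_self hz]
  obtain ⟨V, hVo, hzV, hVs, hVpre, hVne⟩ := punctured_nbhd s hs z hz
  intro u v hu hv hsub hu' hv'
  by_contra hne'
  rw [not_nonempty_iff_eq_empty] at hne'
  have hPsub : V \ {z} ⊆ u ∪ v := fun m hm => hsub ⟨hVs hm.1, hm.2⟩
  have hPor : V \ {z} ⊆ u ∨ V \ {z} ⊆ v := by
    by_contra hcon
    push_neg at hcon
    obtain ⟨hnu, hnv⟩ := hcon
    obtain ⟨p1, hp1, hp1u⟩ := not_subset.1 hnu
    obtain ⟨p2, hp2, hp2v⟩ := not_subset.1 hnv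
    have h1 : ((V \ {z}) ∩ u).Nonempty := ⟨p2, hp2, (hPsub hp2).resolve_right hp2v⟩
    have h2 : ((V \ {z}) ∩ v).Nonempty := ⟨p1, hp1, (hPsub hp1).resolve_left hp1u⟩
    obtain ⟨w, hw⟩ := hVpre u v hu hv hPsub h1 h2
    have : w ∈ (s \ {z}) ∩ (u ∩ v) := ⟨⟨hVs hw.1.1, hw.1.2⟩, hw.2⟩
    rw [hne'] at this
    exact this
  have main : ∀ u' v' : Set M, IsOpen u' → IsOpen v' → s \ {z} ⊆ u' ∪ v' →
      (s \ {z}) ∩ (u' ∩ v') = ∅ → V \ {z} ⊆ u' → ((s \ {z}) ∩ v').Nonempty → False := by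
    intro u' v' hu' hv' hsub' hne'' hPu ⟨q, hq⟩
    have hsub2 : s ⊆ (u' ∪ V) ∪ v' := by
      intro m hm
      by_cases hmz : m = z
      · exact Or.inl (Or.inr (hmz ▸ hzV))
      · rcases hsub' ⟨hm, hmz⟩ with h | h
        · exact Or.inl (Or.inl h)
        · exact Or.inr h
    have h1 : (s ∩ (u' ∪ V)).Nonempty := ⟨z, hz, Or.inr hzV⟩
    have h2 : (s ∩ v').Nonempty := ⟨q, hq.1.1, hq.2⟩
    obtain ⟨w, hws, hw⟩ := hsc (u' ∪ V) v' (hu'.union hVo) hv' hsub2 h1 h2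
    by_cases hwz : w = z
    · -- z ∈ v'; find a punctured neighbourhood inside V ∩ v'
      have hzv' : z ∈ v' := hwz ▸ hw.2
      obtain ⟨V', _, hzV', hV's, _, hne3⟩ :=
        punctured_nbhd (V ∩ v') (hVo.inter hv') z ⟨hzV, hzv'⟩
      obtain ⟨p', hp'⟩ := hne3
      have hp'Vv : p' ∈ V ∩ v' := hV's hp'.1
      have hp'u : p' ∈ u' := hPu ⟨hp'Vv.1, hp'.2⟩
      have : p' ∈ (s \ {z}) ∩ (u' ∩ v') :=
        ⟨⟨hVs hp'Vv.1, hp'.2⟩, hp'u, hp'Vv.2⟩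
      rw [hne''] at this
      exact this
    · have hwsz : w ∈ s \ {z} := ⟨hws, hwz⟩
      rcases hw.1 with hwu | hwV
      · have : w ∈ (s \ {z}) ∩ (u' ∩ v') := ⟨hwsz, hwu, hw.2⟩
        rw [hne''] at this
        exact this
      · have hwu : w ∈ u' := hPu ⟨hwV, hwz⟩
        have : w ∈ (s \ {z}) ∩ (u' ∩ v') := ⟨hwsz, hwu, hw.2⟩
        rw [hne''] at this
        exact this
  rcases hPor with hPu | hPv
  · exact main u v hu hv hsub hne' hPu hv'
  · apply main v u hv hu (union_comm u v ▸ hsub) ?_ hPv hu'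
    rw [inter_comm v u]
    exact hne'
end Surface

section Main

variable {M : Type*} [TopologicalSpace M] [T2Space M]
  [ChartedSpace (EuclideanSpace ℝ (Fin 2)) M]

lemma compl_finite_preconnected [ConnectedSpace M] (F : Set M) (hF : F.Finite) :
    IsPreconnected (Fᶜ : Set M) := by
  induction F, hF using Set.Finite.induction_on with
  | empty => rw [compl_empty]; exact isPreconnected_univ
  | @insert z F hzF hFfin ih =>
    have hins : (insert z F)ᶜ = Fᶜ \ {z} := by
      ext m; simp [mem_insert_iff, not_or, and_comm]
    rw [hins]
    exact diff_singleton_preconnected hFfin.isClosed.isOpen_compl ih z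

lemma local_move (a : M) (F : Set M) (hFc : IsClosed F) (ha : a ∉ F) :
    ∃ U : Set M, IsOpen U ∧ a ∈ U ∧ U ∩ F = ∅ ∧
      ∀ b ∈ U, ∃ h : M ≃ₜ M, h a = b ∧ ∀ m ∈ F, h m = m := by
  set φ := chartAt (EuclideanSpace ℝ (Fin 2)) a with hφ
  have has : a ∈ φ.source := mem_chart_source _ a
  set W : Set M := φ.source ∩ Fᶜ with hW
  have hWo : IsOpen W := φ.open_source.inter hFc.isOpen_compl
  have hWs : W ⊆ φ.source := inter_subset_left
  have haW : a ∈ W := ⟨has, ha⟩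
  have hWopen : IsOpen (φ '' W) := φ.isOpen_image_of_subset_source hWo hWs
  have hWt : φ '' W ⊆ φ.target := by
    rw [← φ.image_source_eq_target]; exact image_mono hWs
  have haWi : φ a ∈ φ '' W := mem_image_of_mem _ haW
  obtain ⟨ε, hε, hball⟩ := (Metric.nhds_basis_closedBall.mem_iff).1 (hWopen.mem_nhds haWi)
  set U : Set M := φ.source ∩ φ ⁻¹' ball (φ a) ε with hU
  have hUo : IsOpen U := φ.isOpen_inter_preimage isOpen_ball
  have haU : a ∈ U := ⟨has, mem_ball_self hε⟩
  have hUW : U ⊆ W := by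
    rintro m ⟨hms, hmb⟩
    obtain ⟨w, hw, hwm⟩ := hball (ball_subset_closedBall hmb)
    rwa [← φ.injOn (hWs hw) hms hwm]
  have hUF : U ∩ F = ∅ := by
    rw [eq_empty_iff_forall_notMem]
    rintro m ⟨hmU, hmF⟩
    exact (hUW hmU).2 hmF
  refine ⟨U, hUo, haU, hUF, ?_⟩
  intro b hb
  have hdist : dist (φ b) (φ a) < ε := mem_ball.1 hb.2
  obtain ⟨g, hga, hg1, hg2⟩ := exists_homeo_ball_move (φ a) (φ b) ε hε hdist
  obtain ⟨h, hsrc, hfix⟩ := exists_glue_homeo φ g (φ a) ε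
    ((hball).trans hWt) hg1 hg2
  refine ⟨h, ?_, ?_⟩
  · rw [hsrc a has, hga, φ.left_inv hb.1]
  · intro m hm
    apply hfix
    rintro ⟨p, hp, rfl⟩
    obtain ⟨w, hw, rfl⟩ := hball hp
    rw [φ.left_inv (hWs hw)] at hm
    exact hw.2 hm

lemma fix_move [ConnectedSpace M] (F : Set M) (hF : F.Finite) (a b : M)
    (ha : a ∉ F) (hb : b ∉ F) :
    ∃ h : M ≃ₜ M, h a = b ∧ ∀ m ∈ F, h m = m := by
  set u : Set M := {b' | ∃ h : M ≃ₜ M, h a = b' ∧ ∀ m ∈ F, h m = m} with hu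
  have hu_sub : u ⊆ Fᶜ := by
    rintro b' ⟨h, hab', hfix⟩ hb'F
    have h1 : h b' = b' := hfix b' hb'F
    have h2 : h a = h b' := by rw [hab', h1]
    have : a = b' := h.injective h2
    exact ha (this ▸ hb'F)
  have huo : IsOpen u := by
    rw [isOpen_iff_mem_nhds]
    rintro b' ⟨h, hab', hfix⟩
    obtain ⟨U, hUo, hbU, hUF, hUm⟩ := local_move b' F hF.isClosed (hu_sub ⟨h, hab', hfix⟩)
    apply Filter.mem_of_superset (hUo.mem_nhds hbU)
    intro b'' hb''
    obtain ⟨h', hb'b'', hfix'⟩ := hUm b'' hb''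
    exact ⟨h.trans h', by simp [Homeomorph.trans_apply, hab', hb'b''],
      fun m hm => by simp [Homeomorph.trans_apply, hfix m hm, hfix' m hm]⟩
  set v : Set M := Fᶜ ∩ uᶜ with hv
  have hvo : IsOpen v := by
    rw [isOpen_iff_mem_nhds]
    rintro b' ⟨hb'F, hb'u⟩
    obtain ⟨U, hUo, hbU, hUF, hUm⟩ := local_move b' F hF.isClosed hb'F
    apply Filter.mem_of_superset (hUo.mem_nhds hbU)
    intro b'' hb''
    refine ⟨fun hc => (eq_empty_iff_forall_notMem.1 hUF b'') ⟨hb'', hc⟩, ?_⟩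
    rintro ⟨h, hab'', hfix⟩
    obtain ⟨h', hb'b'', hfix'⟩ := hUm b'' hb''
    apply hb'u
    refine ⟨h.trans h'.symm, ?_, fun m hm => ?_⟩
    · simp only [Homeomorph.trans_apply, hab'']
      rw [← hb'b'', Homeomorph.symm_apply_apply]
    · simp only [Homeomorph.trans_apply, hfix m hm]
      have := hfix' m hm
      calc h'.symm m = h'.symm (h' m) := by rw [this]
        _ = m := h'.symm_apply_apply m
  by_contra hcon
  push_neg at hcon
  have hbu : b ∉ u := by
    intro hbu'
    obtain ⟨h, h1, h2⟩ := hbu'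
    obtain ⟨m, hmF, hmne⟩ := hcon h h1
    exact hmne (h2 m hmF)
  have hbv : b ∈ v := ⟨hb, hbu⟩
  have hpc := compl_finite_preconnected F hF
  have hsub : (Fᶜ : Set M) ⊆ u ∪ v := by
    intro m hm
    by_cases hmu : m ∈ u
    · exact Or.inl hmu
    · exact Or.inr ⟨hm, hmu⟩
  have hau : a ∈ u := ⟨Homeomorph.refl M, rfl, fun m _ => rfl⟩
  obtain ⟨w, _, hwu, hwv⟩ := hpc u v huo hvo hsub ⟨a, ha, hau⟩ ⟨b, hb, hbv⟩
  exact hwv.2 hwu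

end Main

/-- A nonempty connected topological 2-manifold is `n`-point homogeneous: any injective
`n`-tuple of points can be taken to any other injective `n`-tuple by a homeomorphism. -/
theorem surface_n_point_homogeneous
    {M : Type*} [TopologicalSpace M] [T2Space M]
    [ChartedSpace (EuclideanSpace ℝ (Fin 2)) M] [Nonempty M] [ConnectedSpace M]
    (n : ℕ) (x y : Fin n → M) (hx : Function.Injective x) (hy : Function.Injective y) :
    ∃ h : M ≃ₜ M, ∀ i, h (x i) = y i := by
  induction n with
  | zero => exact ⟨Homeomorph.refl M, fun i => i.elim0⟩
  | succ n ih =>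
    obtain ⟨h₀, hh₀⟩ := ih (x ∘ Fin.castSucc) (y ∘ Fin.castSucc)
      (hx.comp (Fin.castSucc_injective n)) (hy.comp (Fin.castSucc_injective n))
    have hh₀' : ∀ i : Fin n, h₀ (x i.castSucc) = y i.castSucc := fun i => hh₀ i
    set F : Set M := Set.range (y ∘ Fin.castSucc) with hF
    have hFfin : F.Finite := Set.finite_range _
    have ha : h₀ (x (Fin.last n)) ∉ F := by
      rintro ⟨i, hi⟩
      have h1 : h₀ (x (Fin.castSucc i)) = h₀ (x (Fin.last n)) := by
        rw [hh₀' i]; exact hi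
      have h2 : x (Fin.castSucc i) = x (Fin.last n) := h₀.injective h1
      have h3 : Fin.castSucc i = Fin.last n := hx h2
      exact absurd h3 (Fin.castSucc_lt_last i).ne
    have hb : y (Fin.last n) ∉ F := by
      rintro ⟨i, hi⟩
      have h3 : Fin.castSucc i = Fin.last n := hy hi
      exact absurd h3 (Fin.castSucc_lt_last i).ne
    obtain ⟨h₁, hab, hfix⟩ := fix_move F hFfin _ _ ha hb
    refine ⟨h₀.trans h₁, fun i => ?_⟩
    refine Fin.lastCases ?_ ?_ i
    · simp only [Homeomorph.trans_apply]
      rw [hab]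
    · intro j
      simp only [Homeomorph.trans_apply]
      rw [hh₀' j]
      exact hfix _ ⟨j, rfl⟩
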